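/- Let R satisfy (H1) and let (y^{(a)}, z^{(a)}) solve SP({a+Σu_n}, R). Define h_n^{(a)} ∈ ℝ₊ᵈ by (h_n^{(a)})_i = max over 1 ≤ k ≤ n of max(0, −((a)_i + Σ_{ℓ=1}^k (u_ℓ)_i)). Then y_n^{(a)} ≤ R⁻¹ h_n^{(a)} componentwise for all n ≥ 1. -/

import Mathlib

open Matrix Finset MeasureTheory ProbabilityTheory

noncomputable section

/-- A pair `(ξ, ζ)` solves the linear complementarity problem `LCP(η, M)`. -/
def IsLCPSol {d : ℕ} (M : Matrix (Fin d) (Fin d) ℝ) (η ξ ζ : Fin d → ℝ) : Prop :=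
  ζ = η + M *ᵥ ξ ∧ (∀ i, 0 ≤ ξ i) ∧ (∀ i, 0 ≤ ζ i) ∧ ξ ⬝ᵥ ζ = 0

/-- `(y, z)` solves the Skorokhod problem `SP({a + Σ u_n}, M)` in the orthant. -/
def IsSPSol {d : ℕ} (M : Matrix (Fin d) (Fin d) ℝ) (a : Fin d → ℝ)
    (u y z : ℕ → Fin d → ℝ) : Prop :=
  y 0 = 0 ∧ z 0 = a ∧
  ∀ n, 1 ≤ n →
    z n = z (n - 1) + u n + M *ᵥ (y n - y (n - 1)) ∧
    (∀ i, 0 ≤ z n i) ∧ (∀ i, 0 ≤ y n i - y (n - 1) i) ∧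
    z n ⬝ᵥ (y n - y (n - 1)) = 0

section NonnegInverse

variable {d : ℕ}

attribute [local instance] Matrix.linftyOpNormedRing Matrix.linftyOpNormedAlgebra

lemma entry_mul_nonneg {A B : Matrix (Fin d) (Fin d) ℝ} (hA : ∀ i j, 0 ≤ A i j)
    (hB : ∀ i j, 0 ≤ B i j) : ∀ i j, 0 ≤ (A * B) i j := by
  intro i j
  rw [Matrix.mul_apply]
  exact Finset.sum_nonneg fun l _ => mul_nonneg (hA i l) (hB l j)

lemma entry_one_nonneg : ∀ i j : Fin d, (0:ℝ) ≤ (1 : Matrix (Fin d) (Fin d) ℝ) i j := by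
  intro i j
  rw [Matrix.one_apply]
  split <;> norm_num

lemma entry_pow_nonneg {X : Matrix (Fin d) (Fin d) ℝ} (hX : ∀ i j, 0 ≤ X i j) (n : ℕ) :
    ∀ i j, 0 ≤ (X ^ n) i j := by
  induction n with
  | zero => simpa using entry_one_nonneg
  | succ m ih => rw [pow_succ]; exact entry_mul_nonneg ih hX

/-- the entry evaluation as a linear map -/
def entryLM (i j : Fin d) : Matrix (Fin d) (Fin d) ℝ →ₗ[ℝ] ℝ where
  toFun A := A i j
  map_add' A B := rfl
  map_smul' c A := rfl

lemma inv_one_sub_entry_nonneg {X : Matrix (Fin d) (Fin d) ℝ} (hX : ∀ i j, 0 ≤ X i j)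
    (hn : ‖X‖ < 1) : ∀ i j, 0 ≤ Ring.inverse (1 - X) i j := by
  intro i j
  have hsum : Summable (fun n : ℕ => X ^ n) := summable_geometric_of_norm_lt_one hn
  rw [← geom_series_eq_inverse X hn]
  have hmap : (∑' n : ℕ, X ^ n) i j = ∑' n : ℕ, (X ^ n) i j := by
    have := ((entryLM (d := d) i j).toContinuousLinearMap).map_tsum hsum
    exact this
  refine le_of_le_of_eq ?_ hmap.symm
  exact tsum_nonneg fun n => entry_pow_nonneg hX n i j

lemma inv_nonneg_of_isUnit {Q : Matrix (Fin d) (Fin d) ℝ} (hQ : ∀ i j, 0 ≤ Q i j)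
    (hu : ∀ t : ℝ, t ∈ Set.Icc (0:ℝ) 1 → IsUnit (1 - t • Q)) :
    ∀ i j, 0 ≤ (1 - Q)⁻¹ i j := by
  -- continuity of the inverse
  have cont : ContinuousOn (fun t : ℝ => Ring.inverse (1 - t • Q)) (Set.Icc 0 1) := by
    intro t ht
    obtain ⟨v, hv⟩ := hu t ht
    have h1 : ContinuousAt (fun t : ℝ => 1 - t • Q) t :=
      (continuousAt_const.sub (continuousAt_id.smul continuousAt_const))
    have h2 : ContinuousAt Ring.inverse ((1 : Matrix (Fin d) (Fin d) ℝ) - t • Q) := by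
      rw [← hv]; exact NormedRing.inverse_continuousAt v
    have h3 := ContinuousAt.comp (g := Ring.inverse) (f := fun t : ℝ => 1 - t • Q) h2 h1
    exact h3.continuousWithinAt
  obtain ⟨C, hC⟩ := IsCompact.exists_bound_of_continuousOn isCompact_Icc cont
  obtain ⟨N, hN⟩ := exists_nat_gt (max 1 (C * ‖Q‖))
  have hN1 : (1:ℝ) < N := lt_of_le_of_lt (le_max_left _ _) hN
  have hNpos : (0:ℝ) < N := by linarith
  have hCQ : C * ‖Q‖ < N := lt_of_le_of_lt (le_max_right _ _) hN
  have main : ∀ k : ℕ, k ≤ N → ∀ i j, 0 ≤ Ring.inverse (1 - ((k:ℝ)/N) • Q) i j := by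
    intro k
    induction k with
    | zero =>
      intro _ i j
      simpa using entry_one_nonneg (d := d) i j
    | succ p ih =>
      intro hpN i j
      have hpN' : p ≤ N := by omega
      have htmem : ((p:ℝ)/N) ∈ Set.Icc (0:ℝ) 1 := by
        constructor
        · positivity
        · rw [div_le_one hNpos]; exact_mod_cast hpN'
      have hA : IsUnit ((1 : Matrix (Fin d) (Fin d) ℝ) - ((p:ℝ)/N) • Q) := hu _ htmem
      set A : Matrix (Fin d) (Fin d) ℝ := 1 - ((p:ℝ)/N) • Q with hAdef
      set B : Matrix (Fin d) (Fin d) ℝ := Ring.inverse A with hBdef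
      have hBnn : ∀ i j, 0 ≤ B i j := ih hpN'
      have hBC : ‖B‖ ≤ C := hC _ htmem
      set X : Matrix (Fin d) (Fin d) ℝ := (1/(N:ℝ)) • (B * Q) with hXdef
      have hXnn : ∀ i j, 0 ≤ X i j := by
        intro i j
        have : X i j = (1/(N:ℝ)) * (B * Q) i j := rfl
        rw [this]
        exact mul_nonneg (by positivity) (entry_mul_nonneg hBnn hQ i j)
      have hXlt : ‖X‖ < 1 := by
        have h1 : ‖X‖ = (1/(N:ℝ)) * ‖B * Q‖ := by
          rw [hXdef, norm_smul]
          congr 1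
          rw [Real.norm_eq_abs, abs_of_pos (by positivity)]
        have h2 : ‖B * Q‖ ≤ C * ‖Q‖ :=
          le_trans (norm_mul_le B Q) (mul_le_mul_of_nonneg_right hBC (norm_nonneg Q))
        rw [h1]
        calc (1/(N:ℝ)) * ‖B * Q‖ ≤ (1/(N:ℝ)) * (C * ‖Q‖) := by
              apply mul_le_mul_of_nonneg_left h2 (by positivity)
          _ < (1/(N:ℝ)) * N := by
              apply mul_lt_mul_of_pos_left hCQ (by positivity)
          _ = 1 := by field_simp
      have hid : (1 : Matrix (Fin d) (Fin d) ℝ) - (((p+1:ℕ):ℝ)/N) • Q = A * (1 - X) := by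
        have hscalar : (((p+1:ℕ):ℝ)/N) = (p:ℝ)/N + 1/N := by push_cast; ring
        rw [mul_sub, mul_one, hXdef, mul_smul_comm, ← Matrix.mul_assoc,
          Ring.mul_inverse_cancel A hA, Matrix.one_mul, hscalar, add_smul, hAdef,
          sub_sub]
      rw [hid, ← Matrix.nonsing_inv_eq_ringInverse, Matrix.mul_inv_rev,
        Matrix.nonsing_inv_eq_ringInverse, Matrix.nonsing_inv_eq_ringInverse]
      exact entry_mul_nonneg (inv_one_sub_entry_nonneg hXnn hXlt) hBnn i j
  have := main N le_rfl
  rw [Matrix.nonsing_inv_eq_ringInverse]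
  have hone : ((N:ℝ)/N) = 1 := div_self (ne_of_gt hNpos)
  intro i j
  have h := this i j
  rw [hone, one_smul] at h
  exact h

end NonnegInverse

lemma isUnit_one_sub_smul_of_spec {d : ℕ} {P : Matrix (Fin d) (Fin d) ℝ}
    (hspec : spectralRadius ℝ P < 1) {t : ℝ} (ht : t ∈ Set.Icc (0:ℝ) 1) :
    IsUnit ((1 : Matrix (Fin d) (Fin d) ℝ) - t • Pᵀ) := by
  have h1 : IsUnit ((1 : Matrix (Fin d) (Fin d) ℝ) - t • P) := by
    rcases eq_or_lt_of_le ht.1 with h0 | h0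
    · rw [← h0]; simp
    · by_contra hcon
      have hk : t⁻¹ ∈ spectrum ℝ P := by
        rw [spectrum.mem_iff]
        intro hU
        apply hcon
        have heq : algebraMap ℝ (Matrix (Fin d) (Fin d) ℝ) t⁻¹ - P
            = t⁻¹ • ((1 : Matrix (Fin d) (Fin d) ℝ) - t • P) := by
          rw [smul_sub, smul_smul, inv_mul_cancel₀ (ne_of_gt h0), one_smul,
            Algebra.algebraMap_eq_smul_one]
        rw [heq, Matrix.isUnit_iff_isUnit_det, Matrix.det_smul, isUnit_iff_ne_zero] at hU
        rw [Matrix.isUnit_iff_isUnit_det, isUnit_iff_ne_zero]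
        intro h
        exact hU (by rw [h, mul_zero])
      have hle : (‖t⁻¹‖₊ : ENNReal) ≤ spectralRadius ℝ P :=
        le_iSup₂ (f := fun k (_ : k ∈ spectrum ℝ P) => (‖k‖₊ : ENNReal)) t⁻¹ hk
      have hlt : (‖t⁻¹‖₊ : ENNReal) < 1 := lt_of_le_of_lt hle hspec
      have hlt' : ‖t⁻¹‖ < 1 := by
        rw [← ENNReal.coe_one, ENNReal.coe_lt_coe] at hlt
        exact_mod_cast hlt
      rw [Real.norm_eq_abs, abs_of_pos (by positivity)] at hlt'
      have hinv : (1:ℝ) ≤ t⁻¹ := by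
        nlinarith [mul_inv_cancel₀ (ne_of_gt h0), inv_nonneg.mpr (le_of_lt h0), ht.2]
      linarith
  have htr : ((1 : Matrix (Fin d) (Fin d) ℝ) - t • P)ᵀ = 1 - t • Pᵀ := by
    rw [Matrix.transpose_sub, Matrix.transpose_smul, Matrix.transpose_one]
  rw [← htr, Matrix.isUnit_iff_isUnit_det, Matrix.det_transpose,
    ← Matrix.isUnit_iff_isUnit_det]
  exact h1

theorem stmt_6 {d : ℕ} (P : Matrix (Fin d) (Fin d) ℝ)
    (hdiag : ∀ i, P i i = 0) (hnonneg : ∀ i j, 0 ≤ P i j)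
    (hspec : spectralRadius ℝ P < 1)
    (a : Fin d → ℝ) (ha : ∀ i, 0 ≤ a i) (u y z : ℕ → Fin d → ℝ)
    (hSP : IsSPSol (1 - Pᵀ) a u y z) :
    ∀ n, (hn : 1 ≤ n) →
      y n ≤ (1 - Pᵀ)⁻¹ *ᵥ (fun i =>
        (Finset.Icc 1 n).sup' (Finset.nonempty_Icc.mpr hn)
          (fun k => max 0 (-(a i + ∑ ℓ ∈ Finset.Icc 1 k, u ℓ i)))) := by
  obtain ⟨hy0, hz0, hrec⟩ := hSP
  set R : Matrix (Fin d) (Fin d) ℝ := 1 - Pᵀ with hRdef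
  have hRunit : IsUnit R := by
    have := isUnit_one_sub_smul_of_spec hspec (t := 1) ⟨zero_le_one, le_refl 1⟩
    simpa [hRdef] using this
  have hRd : IsUnit R.det := (Matrix.isUnit_iff_isUnit_det R).mp hRunit
  have hRinv : ∀ i j, 0 ≤ R⁻¹ i j :=
    inv_nonneg_of_isUnit (fun i j => hnonneg j i)
      (fun t ht => isUnit_one_sub_smul_of_spec hspec ht)
  -- telescoped identity
  have hz : ∀ n, z n = a + (∑ ℓ ∈ Finset.Icc 1 n, u ℓ) + R *ᵥ y n := by
    intro n
    induction n with
    | zero => simp [hz0, hy0]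
    | succ m ih =>
      obtain ⟨h1, -, -, -⟩ := hrec (m + 1) (by omega)
      rw [Nat.add_sub_cancel] at h1
      rw [h1, ih, Finset.sum_Icc_succ_top (by omega : 1 ≤ m + 1), Matrix.mulVec_sub]
      abel
  -- monotonicity
  have hinc : ∀ k, 1 ≤ k → ∀ i, y (k - 1) i ≤ y k i := by
    intro k hk i
    have h := (hrec k hk).2.2.1 i
    simpa [sub_nonneg] using h
  have hmono : ∀ i, Monotone fun n => y n i := by
    intro i
    apply monotone_nat_of_le_succ
    intro m
    have := hinc (m + 1) (by omega) i
    simpa using this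
  have ynonneg : ∀ n i, 0 ≤ y n i := by
    intro n i
    have := hmono i (Nat.zero_le n)
    simpa [hy0] using this
  intro n hn
  set h : Fin d → ℝ := fun i =>
    (Finset.Icc 1 n).sup' (Finset.nonempty_Icc.mpr hn)
      (fun k => max 0 (-(a i + ∑ ℓ ∈ Finset.Icc 1 k, u ℓ i))) with hhdef
  have hRy : ∀ m j, (R *ᵥ y m) j = y m j - (Pᵀ *ᵥ y m) j := by
    intro m j
    rw [hRdef, Matrix.sub_mulVec, Matrix.one_mulVec, Pi.sub_apply]
  have key : ∀ j, (R *ᵥ y n) j ≤ h j := by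
    intro j
    have hhj0 : 0 ≤ h j :=
      le_trans (le_max_left 0 (-(a j + ∑ ℓ ∈ Finset.Icc 1 n, u ℓ j)))
        (Finset.le_sup' (fun k => max 0 (-(a j + ∑ ℓ ∈ Finset.Icc 1 k, u ℓ j)))
          (Finset.mem_Icc.mpr ⟨hn, le_refl n⟩))
    have hPTnn : ∀ m, 0 ≤ (Pᵀ *ᵥ y m) j := by
      intro m
      simp only [Matrix.mulVec, dotProduct]
      apply Finset.sum_nonneg
      intro l _
      exact mul_nonneg (hnonneg l j) (ynonneg m l)
    by_cases hy : y n j = 0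
    · rw [hRy n j, hy]
      have := hPTnn n
      linarith
    · have hypos : 0 < y n j := lt_of_le_of_ne (ynonneg n j) (Ne.symm hy)
      set K : Finset ℕ := (Finset.Icc 1 n).filter (fun k => y (k - 1) j < y k j) with hKdef
      have hKne : K.Nonempty := by
        by_contra hemp
        rw [Finset.not_nonempty_iff_eq_empty] at hemp
        have hzero : ∀ m, m ≤ n → y m j = 0 := by
          intro m
          induction m with
          | zero => intro _; rw [hy0]; rfl
          | succ p ihp =>
            intro hpn
            have hp : y p j = 0 := ihp (by omega)
            have hnlt : ¬ (y (p + 1 - 1) j < y (p + 1) j) := by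
              intro hlt
              have : p + 1 ∈ K := Finset.mem_filter.mpr
                ⟨Finset.mem_Icc.mpr ⟨by omega, hpn⟩, hlt⟩
              rw [hemp] at this
              exact absurd this (Finset.notMem_empty _)
            rw [Nat.add_sub_cancel, hp] at hnlt
            have := ynonneg (p + 1) j
            linarith [not_lt.mp hnlt]
        exact hy (hzero n le_rfl)
      set k : ℕ := K.max' hKne with hkdef
      have hkK : k ∈ K := K.max'_mem hKne
      obtain ⟨hkIcc, hklt⟩ := Finset.mem_filter.mp hkK
      obtain ⟨hk1, hkn⟩ := Finset.mem_Icc.mp hkIcc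
      -- y is flat on [k, n] in coordinate j
      have heq : ∀ m, k ≤ m → m ≤ n → y m j = y k j := by
        intro m
        induction m with
        | zero => intro h0 _; exact absurd h0 (by omega)
        | succ p ihp =>
          intro hkm hmn
          rcases Nat.lt_or_ge p k with hpk | hpk
          · have : k = p + 1 := by omega
            rw [this]
          · have hpj := ihp hpk (by omega)
            have hnotmem : p + 1 ∉ K := by
              intro hm
              have := K.le_max' _ hm
              omega
            have hnlt : ¬ (y p j < y (p + 1) j) := by
              intro hlt
              exact hnotmem (Finset.mem_filter.mpr
                ⟨Finset.mem_Icc.mpr ⟨by omega, hmn⟩, by rwa [Nat.add_sub_cancel]⟩)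
            have hge := hinc (p + 1) (by omega) j
            rw [Nat.add_sub_cancel] at hge
            rw [le_antisymm (not_lt.mp hnlt) hge, hpj]
      have hynk : y n j = y k j := heq n hkn le_rfl
      obtain ⟨-, hzpos, hincpos, hcomp⟩ := hrec k hk1
      have hzkj : z k j = 0 := by
        rw [dotProduct] at hcomp
        have hterm := (Finset.sum_eq_zero_iff_of_nonneg
          (fun l _ => mul_nonneg (hzpos l) (hincpos l))).mp hcomp j (Finset.mem_univ j)
        have hpos : 0 < (y k - y (k - 1)) j := by
          rw [Pi.sub_apply]
          linarith
        exact (mul_eq_zero.mp hterm).resolve_right (ne_of_gt hpos)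
      have hzk := congrFun (hz k) j
      rw [hzkj] at hzk
      have hRyk : (R *ᵥ y k) j = -(a j + ∑ ℓ ∈ Finset.Icc 1 k, u ℓ j) := by
        have hsa : (∑ ℓ ∈ Finset.Icc 1 k, u ℓ) j = ∑ ℓ ∈ Finset.Icc 1 k, u ℓ j :=
          Finset.sum_apply j _ _
        rw [Pi.add_apply, Pi.add_apply, hsa] at hzk
        linarith
      have hmc : (Pᵀ *ᵥ y k) j ≤ (Pᵀ *ᵥ y n) j := by
        simp only [Matrix.mulVec, dotProduct]
        apply Finset.sum_le_sum
        intro l _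
        exact mul_le_mul_of_nonneg_left (hmono l hkn) (hnonneg l j)
      calc (R *ᵥ y n) j = y n j - (Pᵀ *ᵥ y n) j := hRy n j
        _ ≤ y k j - (Pᵀ *ᵥ y k) j := by rw [hynk]; linarith
        _ = (R *ᵥ y k) j := (hRy k j).symm
        _ = -(a j + ∑ ℓ ∈ Finset.Icc 1 k, u ℓ j) := hRyk
        _ ≤ max 0 (-(a j + ∑ ℓ ∈ Finset.Icc 1 k, u ℓ j)) := le_max_right _ _
        _ ≤ h j := Finset.le_sup'
              (fun k => max 0 (-(a j + ∑ ℓ ∈ Finset.Icc 1 k, u ℓ j))) hkIcc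
  -- conclude
  have e1 : R⁻¹ *ᵥ (R *ᵥ y n) = y n := by
    rw [Matrix.mulVec_mulVec, Matrix.nonsing_inv_mul R hRd, Matrix.one_mulVec]
  intro i
  calc y n i = (R⁻¹ *ᵥ (R *ᵥ y n)) i := by rw [e1]
    _ ≤ (R⁻¹ *ᵥ h) i := by
        simp only [Matrix.mulVec, dotProduct]
        apply Finset.sum_le_sum
        intro l _
        exact mul_le_mul_of_nonneg_left (key l) (hRinv i l)
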